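/- Let 0 = t_0 < t_1 < ⋯ < t_N = T be a mesh with steps τ_k = t_k − t_{k−1}, let α ∈ (0,1), and let a^{(n)}_{n−k} be the L1 kernel. Then for every n with 2 ≤ n ≤ N one has a^{(n)}_0 − a^{(n)}_1 > (α/τ_n) ω_{2−α}(τ_n); consequently, if τ_n ≤ 1 then a^{(n)}_0 − a^{(n)}_1 ≥ α · ω_{2−α}(1). -/

import Mathlib

open Real Finset

/-- The kernel `ω_μ(s) = s^(μ-1)/Γ(μ)`. -/
noncomputable def omegaK (μ s : ℝ) : ℝ := s ^ (μ - 1) / Real.Gamma μ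

/-- The L1 kernel: `L1K α t n k` is `a^{(n)}_{n-k}`. -/
noncomputable def L1K (α : ℝ) (t : ℕ → ℝ) (n k : ℕ) : ℝ :=
  (omegaK (2 - α) (t n - t (k - 1)) - omegaK (2 - α) (t n - t k)) / (t k - t (k - 1))

/-- Mean value inequality: the secant slope of `x ^ (1-α)` on `[a,b]` is less
than the derivative at the left endpoint. -/
lemma slope_lt_rpow (α a b : ℝ) (hα0 : 0 < α) (hα1 : α < 1) (ha : 0 < a) (hab : a < b) :
    (b ^ (1 - α) - a ^ (1 - α)) / (b - a) < (1 - α) * a ^ (-α) := by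
  have hcont : ContinuousOn (fun x : ℝ => x ^ (1 - α)) (Set.Icc a b) := by
    apply ContinuousOn.rpow_const continuousOn_id
    intro x hx
    exact Or.inl (ne_of_gt (lt_of_lt_of_le ha hx.1))
  have hderiv : ∀ x ∈ Set.Ioo a b,
      HasDerivAt (fun x : ℝ => x ^ (1 - α)) ((1 - α) * x ^ (-α)) x := by
    intro x hx
    have hx0 : x ≠ 0 := ne_of_gt (lt_trans ha hx.1)
    have := Real.hasDerivAt_rpow_const (x := x) (p := 1 - α) (Or.inl hx0)
    simpa [show (1 : ℝ) - α - 1 = -α by ring] using this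
  obtain ⟨c, hc, hce⟩ := exists_hasDerivAt_eq_slope (fun x : ℝ => x ^ (1 - α))
    (fun x => (1 - α) * x ^ (-α)) hab hcont hderiv
  rw [← hce]
  have hlt : c ^ (-α) < a ^ (-α) :=
    Real.rpow_lt_rpow_of_neg ha hc.1 (by linarith)
  have h1α : 0 < 1 - α := by linarith
  exact mul_lt_mul_of_pos_left hlt h1α

theorem L1_kernel_first_difference_lower_bound
    (T : ℝ) (hT : 0 < T) (N : ℕ) (hN : 1 ≤ N)
    (t : ℕ → ℝ) (ht0 : t 0 = 0) (htN : t N = T)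
    (hmesh : ∀ k, 1 ≤ k → k ≤ N → t (k - 1) < t k)
    (α : ℝ) (hα0 : 0 < α) (hα1 : α < 1) :
    ∀ n, 2 ≤ n → n ≤ N →
      L1K α t n n - L1K α t n (n - 1) >
        (α / (t n - t (n - 1))) * omegaK (2 - α) (t n - t (n - 1)) ∧
      (t n - t (n - 1) ≤ 1 →
        L1K α t n n - L1K α t n (n - 1) ≥ α * omegaK (2 - α) 1) := by
  intro n hn2 hnN
  have hΓ : 0 < Real.Gamma (2 - α) := Real.Gamma_pos_of_pos (by linarith)
  set Γ := Real.Gamma (2 - α) with hΓdef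
  have hΓ0 : Γ ≠ 0 := ne_of_gt hΓ
  -- mesh facts
  have h1 : t (n - 1) < t n := by
    have := hmesh n (by omega) hnN
    exact this
  have h2 : t (n - 1 - 1) < t (n - 1) := hmesh (n - 1) (by omega) (by omega)
  set a := t n - t (n - 1) with hadef
  set b := t n - t (n - 1 - 1) with hbdef
  have ha : 0 < a := by simp [hadef]; linarith
  have hab : a < b := by simp [hadef, hbdef]; linarith
  have hba : 0 < b - a := by linarith
  have hba' : b - a = t (n - 1) - t (n - 1 - 1) := by rw [hadef, hbdef]; ring
  have hμ : (2 : ℝ) - α - 1 = 1 - α := by ring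
  -- abbreviations
  set A := a ^ (1 - α) with hAdef
  set B := b ^ (1 - α) with hBdef
  have hA0 : 0 < A := Real.rpow_pos_of_pos ha _
  have hAa : A / a = a ^ (-α) := by
    rw [hAdef, show (-α : ℝ) = (1 - α) - 1 by ring, Real.rpow_sub_one (ne_of_gt ha)]
  -- unfold L1K
  have hL1n : L1K α t n n = A / Γ / a := by
    unfold L1K omegaK
    rw [hμ, sub_self, Real.zero_rpow (by linarith)]
    simp [hadef, hAdef, hΓdef]
  have hL1n1 : L1K α t n (n - 1) = (B / Γ - A / Γ) / (b - a) := by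
    unfold L1K omegaK
    rw [hμ, hba']
  have key : (B - A) / (b - a) < (1 - α) * a ^ (-α) :=
    slope_lt_rpow α a b hα0 hα1 ha hab
  have key2 : α * (A / a) < A / a - (B - A) / (b - a) := by
    rw [hAa]; nlinarith [key]
  have main : L1K α t n n - L1K α t n (n - 1) >
      (α / a) * (A / Γ) := by
    rw [hL1n, hL1n1]
    have e1 : A / Γ / a - (B / Γ - A / Γ) / (b - a) = (A / a - (B - A) / (b - a)) / Γ := by
      field_simp
    have e2 : (α / a) * (A / Γ) = (α * (A / a)) / Γ := by ring
    rw [e1, e2]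
    gcongr
  constructor
  · have : omegaK (2 - α) a = A / Γ := by unfold omegaK; rw [hμ]
    rw [this]; exact main
  · intro hτ
    have hge : (1 : ℝ) ≤ a ^ (-α) :=
      Real.one_le_rpow_of_pos_of_le_one_of_nonpos ha hτ (by linarith)
    have hω1 : omegaK (2 - α) 1 = 1 / Γ := by
      unfold omegaK; rw [hμ, Real.one_rpow]
    have h3 : α * omegaK (2 - α) 1 ≤ (α / a) * (A / Γ) := by
      rw [hω1]
      have e : (α / a) * (A / Γ) = (α * a ^ (-α)) / Γ := by
        rw [← hAa]; field_simp
      rw [e, mul_one_div]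
      gcongr
      nlinarith
    linarith [main, h3]
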